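/- Per-iteration identity for Laplace noise under L₁-bounded updates (core of Theorem 5): Let d ∈ ℕ, d ≥ 1, λ > 0, R > 0, and let f(w) = (λ/2)^d exp(−λ‖w‖₁). Then ∫_{ℝ^d} sup_{x: ‖x‖₁ ≤ R} f(w − x) dw = (λR)^d/d! + ∑_{i=0}^{d−1} (λR)^i / i!. (The first term equals f(0)·V₁(d,R) where V₁(d,R) = (2R)^d/d! is the volume of the L₁-ball of radius R.) -/

import Mathlib

open MeasureTheory Set Filter
open scoped BigOperators ENNReal

lemma aux_integrable_exp_poly (k : ℕ) (a b : ℝ) :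
    IntegrableOn (fun x : ℝ => Real.exp (-x) * (a + b * x) ^ k) (Ioi (0:ℝ)) := by
  have hterm : ∀ i : ℕ, IntegrableOn (fun x : ℝ => Real.exp (-x) * x ^ i) (Ioi (0:ℝ)) := by
    intro i
    have h := Real.GammaIntegral_convergent (s := (i:ℝ) + 1) (by positivity)
    refine h.congr_fun (fun x hx => ?_) measurableSet_Ioi
    simp only [add_sub_cancel_right, Real.rpow_natCast]
  have hrw : ∀ x : ℝ, Real.exp (-x) * (a + b * x) ^ k
      = ∑ i ∈ Finset.range (k+1),
          (a ^ i * b ^ (k-i) * (k.choose i : ℝ)) * (Real.exp (-x) * x ^ (k-i)) := by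
    intro x
    rw [add_pow, Finset.mul_sum]
    refine Finset.sum_congr rfl (fun i hi => ?_)
    rw [mul_pow]
    ring
  simp only [hrw]
  exact integrable_finset_sum _ (fun i _ => (hterm (k-i)).const_mul _)

lemma aux_tendsto_exp_poly (k : ℕ) (a b : ℝ) :
    Tendsto (fun x : ℝ => Real.exp (-x) * (a + b * x) ^ k) atTop (nhds 0) := by
  have hrw : (fun x : ℝ => Real.exp (-x) * (a + b * x) ^ k)
      = fun x => ∑ i ∈ Finset.range (k+1),
          (a ^ i * b ^ (k-i) * (k.choose i : ℝ)) * (x ^ (k-i) * Real.exp (-x)) := by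
    funext x
    rw [add_pow, Finset.mul_sum]
    refine Finset.sum_congr rfl (fun i hi => ?_)
    rw [mul_pow]
    ring
  rw [hrw]
  have h := tendsto_finset_sum (Finset.range (k+1)) (fun i (_ : i ∈ Finset.range (k+1)) =>
    ((Real.tendsto_pow_mul_exp_neg_atTop_nhds_zero (k-i)).const_mul (a ^ i * b ^ (k-i) * (k.choose i : ℝ))))
  simpa using h

lemma aux_integral_exp_poly (k : ℕ) (a b : ℝ) :
    ∫ x in Ioi (0:ℝ), Real.exp (-x) * (a + b * x) ^ k
      = ∑ i ∈ Finset.range (k+1),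
          ((k.factorial : ℝ) / (i.factorial : ℝ)) * b ^ (k-i) * a ^ i := by
  induction k with
  | zero => simpa using integral_exp_neg_Ioi_zero
  | succ n ih =>
    set F : ℝ → ℝ := fun x => -(Real.exp (-x) * (a + b * x) ^ (n+1)) with hF
    set F' : ℝ → ℝ := fun x => Real.exp (-x) * (a + b * x) ^ (n+1)
        - b * ((n:ℝ)+1) * (Real.exp (-x) * (a + b * x) ^ n) with hF'
    have hderiv : ∀ x : ℝ, HasDerivAt F (F' x) x := by
      intro x
      have h1 : HasDerivAt (fun x : ℝ => Real.exp (-x)) (-Real.exp (-x)) x := by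
        simpa [Function.comp_def] using (Real.hasDerivAt_exp (-x)).comp x (hasDerivAt_neg x)
      have h2 : HasDerivAt (fun x : ℝ => a + b * x) b x := by
        simpa using ((hasDerivAt_id x).const_mul b).const_add a
      have h3 : HasDerivAt (fun x : ℝ => (a + b * x) ^ (n+1))
          ((((n:ℝ)+1) * (a + b * x) ^ n) * b) x := by
        have := (hasDerivAt_pow (n+1) (a + b * x)).comp x h2
        simpa [Function.comp_def, Nat.cast_add, Nat.add_sub_cancel] using this
      have h4 := (h1.mul h3).neg
      have e : F' x = -(-Real.exp (-x) * (a + b * x) ^ (n+1)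
          + Real.exp (-x) * (((n:ℝ)+1) * (a + b * x) ^ n * b)) := by
        simp only [hF']
        ring
      rw [e]
      exact h4
    have hFint : IntegrableOn F' (Ioi (0:ℝ)) :=
      (aux_integrable_exp_poly (n+1) a b).sub ((aux_integrable_exp_poly n a b).const_mul _)
    have hTend : Tendsto F atTop (nhds 0) := by
      have := (aux_tendsto_exp_poly (n+1) a b).neg
      simpa using this
    have key : ∫ x in Ioi (0:ℝ), F' x = 0 - F 0 :=
      integral_Ioi_of_hasDerivAt_of_tendsto (hderiv 0).continuousAt.continuousWithinAt
        (fun x _ => hderiv x) hFint hTend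
    have hF0 : (0:ℝ) - F 0 = a ^ (n+1) := by simp [hF]
    have split : ∀ x : ℝ, Real.exp (-x) * (a + b * x) ^ (n+1)
        = F' x + (b * ((n:ℝ)+1)) * (Real.exp (-x) * (a + b * x) ^ n) := by
      intro x; simp only [hF']; ring
    calc ∫ x in Ioi (0:ℝ), Real.exp (-x) * (a + b * x) ^ (n+1)
        = ∫ x in Ioi (0:ℝ), (F' x + (b * ((n:ℝ)+1)) * (Real.exp (-x) * (a + b * x) ^ n)) := by
          exact integral_congr_ae (Eventually.of_forall (fun x => split x))
      _ = (∫ x in Ioi (0:ℝ), F' x)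
            + ∫ x in Ioi (0:ℝ), (b * ((n:ℝ)+1)) * (Real.exp (-x) * (a + b * x) ^ n) :=
          integral_add hFint ((aux_integrable_exp_poly n a b).const_mul _)
      _ = a ^ (n+1) + (b * ((n:ℝ)+1)) * ∫ x in Ioi (0:ℝ), Real.exp (-x) * (a + b * x) ^ n := by
          rw [key, hF0, integral_const_mul]
      _ = a ^ (n+1) + (b * ((n:ℝ)+1)) * ∑ i ∈ Finset.range (n+1),
            ((n.factorial : ℝ) / (i.factorial : ℝ)) * b ^ (n-i) * a ^ i := by rw [ih]
      _ = ∑ i ∈ Finset.range (n+1+1),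
            (((n+1).factorial : ℝ) / (i.factorial : ℝ)) * b ^ (n+1-i) * a ^ i := by
          conv_rhs => rw [Finset.sum_range_succ]
          rw [Finset.mul_sum]
          have hlast : (((n+1).factorial : ℝ) / ((n+1).factorial : ℝ)) * b ^ (n+1-(n+1)) * a ^ (n+1)
              = a ^ (n+1) := by
            rw [div_self (by exact_mod_cast (n+1).factorial_ne_zero), Nat.sub_self]
            ring
          rw [hlast, add_comm]
          congr 1
          refine Finset.sum_congr rfl (fun i hi => ?_)
          have hi' : i ≤ n := Nat.lt_succ_iff.mp (Finset.mem_range.mp hi)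
          have h1 : n + 1 - i = (n - i) + 1 := by omega
          have h2 : (((n+1).factorial : ℝ)) = ((n:ℝ)+1) * (n.factorial : ℝ) := by
            rw [Nat.factorial_succ]; push_cast; ring
          rw [h1, pow_succ, h2]
          ring




section lemB
variable (k : ℕ) (a b c : ℝ)

lemma aux_image (hc : 0 < c) :
    (fun x : ℝ => c * Real.exp (-x)) '' Ioi (0:ℝ) = Ioo 0 c := by
  ext t
  constructor
  · rintro ⟨x, hx, rfl⟩
    refine ⟨by positivity, ?_⟩
    have : Real.exp (-x) < 1 := Real.exp_lt_one_iff.mpr (by simpa using hx)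
    calc c * Real.exp (-x) < c * 1 := by exact (mul_lt_mul_iff_right₀ hc).mpr this
      _ = c := mul_one c
  · rintro ⟨ht0, htc⟩
    refine ⟨Real.log c - Real.log t, ?_, ?_⟩
    · simpa using Real.log_lt_log ht0 htc
    · show c * Real.exp (-(Real.log c - Real.log t)) = t
      rw [neg_sub, Real.exp_sub, Real.exp_log ht0, Real.exp_log hc]
      field_simp

lemma aux_integral_log_pow (hb : 0 < b) (hc : 0 < c) :
    (∫ t in Ioc (0:ℝ) c, (a - b * Real.log t) ^ k)
      = c * ∑ i ∈ Finset.range (k+1),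
          ((k.factorial : ℝ) / (i.factorial : ℝ)) * b ^ (k-i) * (a - b * Real.log c) ^ i := by
  have hderiv : ∀ x ∈ Ioi (0:ℝ), HasDerivWithinAt (fun x : ℝ => c * Real.exp (-x))
      (-(c * Real.exp (-x))) (Ioi (0:ℝ)) x := by
    intro x _
    have h1 : HasDerivAt (fun x : ℝ => Real.exp (-x)) (-Real.exp (-x)) x := by
      simpa [Function.comp_def] using (Real.hasDerivAt_exp (-x)).comp x (hasDerivAt_neg x)
    have := (h1.const_mul c).hasDerivWithinAt (s := Ioi (0:ℝ))
    rw [show -(c * Real.exp (-x)) = c * -Real.exp (-x) by ring]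
    exact this
  have hinj : InjOn (fun x : ℝ => c * Real.exp (-x)) (Ioi (0:ℝ)) := by
    intro x _ y _ h
    simp only [mul_eq_mul_left_iff, Real.exp_eq_exp, or_iff_left hc.ne'] at h
    linarith [neg_injective h]
  have hcov := integral_image_eq_integral_abs_deriv_smul measurableSet_Ioi hderiv hinj
    (fun t => (a - b * Real.log t) ^ k)
  rw [aux_image c hc] at hcov
  have heq : ∀ x ∈ Ioi (0:ℝ), |(-(c * Real.exp (-x)))| • (a - b * Real.log (c * Real.exp (-x))) ^ k
      = c * (Real.exp (-x) * ((a - b * Real.log c) + b * x) ^ k) := by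
    intro x _
    have habs : |(-(c * Real.exp (-x)))| = c * Real.exp (-x) := by
      rw [abs_neg, abs_of_pos (by positivity)]
    rw [habs, Real.log_mul hc.ne' (Real.exp_ne_zero _), Real.log_exp, smul_eq_mul]
    ring_nf
  rw [integral_Ioc_eq_integral_Ioo, hcov,
    setIntegral_congr_fun measurableSet_Ioi heq, integral_const_mul, aux_integral_exp_poly]

lemma aux_integrableOn_log_pow (hc : 0 < c) :
    IntegrableOn (fun t : ℝ => (a - b * Real.log t) ^ k) (Ioc (0:ℝ) c) := by
  rw [integrableOn_Ioc_iff_integrableOn_Ioo]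
  have hderiv : ∀ x ∈ Ioi (0:ℝ), HasDerivWithinAt (fun x : ℝ => c * Real.exp (-x))
      (-(c * Real.exp (-x))) (Ioi (0:ℝ)) x := by
    intro x _
    have h1 : HasDerivAt (fun x : ℝ => Real.exp (-x)) (-Real.exp (-x)) x := by
      simpa [Function.comp_def] using (Real.hasDerivAt_exp (-x)).comp x (hasDerivAt_neg x)
    have := (h1.const_mul c).hasDerivWithinAt (s := Ioi (0:ℝ))
    rw [show -(c * Real.exp (-x)) = c * -Real.exp (-x) by ring]
    exact this
  have hinj : InjOn (fun x : ℝ => c * Real.exp (-x)) (Ioi (0:ℝ)) := by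
    intro x _ y _ h
    simp only [mul_eq_mul_left_iff, Real.exp_eq_exp, or_iff_left hc.ne'] at h
    linarith [neg_injective h]
  have hiff := integrableOn_image_iff_integrableOn_abs_deriv_smul measurableSet_Ioi hderiv hinj
    (fun t => (a - b * Real.log t) ^ k)
  rw [aux_image c hc] at hiff
  rw [hiff]
  have heq : ∀ x ∈ Ioi (0:ℝ), |(-(c * Real.exp (-x)))| • (a - b * Real.log (c * Real.exp (-x))) ^ k
      = c * (Real.exp (-x) * ((a - b * Real.log c) + b * x) ^ k) := by
    intro x _
    have habs : |(-(c * Real.exp (-x)))| = c * Real.exp (-x) := by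
      rw [abs_neg, abs_of_pos (by positivity)]
    rw [habs, Real.log_mul hc.ne' (Real.exp_ne_zero _), Real.log_exp, smul_eq_mul]
    ring_nf
  have h2 : IntegrableOn (fun x : ℝ => c * (Real.exp (-x) * ((a - b * Real.log c) + b * x) ^ k))
      (Ioi (0:ℝ)) := (aux_integrable_exp_poly k (a - b * Real.log c) b).const_mul c
  exact h2.congr_fun (fun x hx => (heq x hx).symm) measurableSet_Ioi

end lemB

lemma aux_volume_l1_ball (d : ℕ) (hd : 1 ≤ d) (s : ℝ) (hs : 0 ≤ s) :
    volume {w : Fin d → ℝ | ∑ i, |w i| ≤ s}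
      = ENNReal.ofReal ((2*s)^d / (d.factorial : ℝ)) := by
  haveI : Nonempty (Fin d) := Fin.pos_iff_nonempty.mp hd
  have h := MeasureTheory.volume_sum_rpow_le (ι := Fin d) (p := 1) le_rfl s
  have hG2 : Real.Gamma (1 + 1) = 1 := by
    simpa using Real.Gamma_nat_eq_factorial 1
  have hGd : Real.Gamma ((d : ℝ) / 1 + 1) = (d.factorial : ℝ) := by
    rw [div_one]
    exact_mod_cast Real.Gamma_nat_eq_factorial d
  simp only [Fintype.card_fin, Real.rpow_one, one_div, inv_one, hG2, hGd] at h
  rw [h]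
  rw [← ENNReal.ofReal_pow hs, ← ENNReal.ofReal_mul (by positivity)]
  congr 1
  rw [mul_one, mul_pow]
  ring


lemma aux_sup (d : ℕ) (lam R : ℝ) (hlam : 0 < lam) (hR : 0 < R)
    (f : (Fin d → ℝ) → ℝ)
    (hf : ∀ w, f w = (lam / 2) ^ d * Real.exp (-lam * ∑ i, |w i|)) (w : Fin d → ℝ) :
    (⨆ x ∈ {x : Fin d → ℝ | ∑ i, |x i| ≤ R}, f (w - x))
      = (lam/2)^d * Real.exp (-lam * max ((∑ i, |w i|) - R) 0) := by
  set C : ℝ := (lam/2)^d with hCdef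
  have hC : 0 < C := by positivity
  set T : ℝ := C * Real.exp (-lam * max ((∑ i, |w i|) - R) 0) with hTdef
  have hT : 0 < T := by positivity
  have hfle : ∀ v : Fin d → ℝ, f v ≤ C := by
    intro v
    rw [hf]
    have h1 : Real.exp (-lam * ∑ i, |v i|) ≤ 1 := by
      rw [Real.exp_le_one_iff]
      have : (0:ℝ) ≤ ∑ i, |v i| := Finset.sum_nonneg (fun i _ => abs_nonneg _)
      nlinarith
    nlinarith
  have hbdd : BddAbove (Set.range fun x : Fin d → ℝ =>
      ⨆ _ : x ∈ {x : Fin d → ℝ | ∑ i, |x i| ≤ R}, f (w - x)) := by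
    refine ⟨C, ?_⟩
    rintro v ⟨x, rfl⟩
    exact Real.iSup_le (fun _ => hfle _) hC.le
  refine le_antisymm ?_ ?_
  · refine Real.iSup_le (fun x => Real.iSup_le (fun hx => ?_) hT.le) hT.le
    have hx' : ∑ i, |x i| ≤ R := hx
    have hkey : max ((∑ i, |w i|) - R) 0 ≤ ∑ i, |(w - x) i| := by
      refine max_le ?_ (Finset.sum_nonneg (fun i _ => abs_nonneg _))
      have h1 : ∀ i, |w i| ≤ |(w - x) i| + |x i| := by
        intro i
        have := abs_add_le (w i - x i) (x i)
        simpa [Pi.sub_apply, sub_add_cancel] using this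
      have h2 : ∑ i, |w i| ≤ (∑ i, |(w - x) i|) + ∑ i, |x i| := by
        rw [← Finset.sum_add_distrib]
        exact Finset.sum_le_sum (fun i _ => h1 i)
      linarith
    rw [hf]
    have : Real.exp (-lam * ∑ i, |(w - x) i|) ≤ Real.exp (-lam * max ((∑ i, |w i|) - R) 0) := by
      rw [Real.exp_le_exp]
      nlinarith
    rw [hTdef, hCdef]
    nlinarith
  · by_cases hw : ∑ i, |w i| ≤ R
    · have hmem : w ∈ {x : Fin d → ℝ | ∑ i, |x i| ≤ R} := hw
      refine le_ciSup_of_le hbdd w ?_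
      rw [ciSup_pos hmem]
      have : f (w - w) = C := by
        rw [sub_self, hf]
        simp
      rw [this, hTdef, max_eq_right (by linarith)]
      simp
    · push_neg at hw
      set S : ℝ := ∑ i, |w i| with hSdef
      have hS : 0 < S := lt_trans hR hw
      set x₀ : Fin d → ℝ := fun i => (R / S) * w i with hx₀
      have hratio : 0 < R / S := by positivity
      have hratio1 : R / S ≤ 1 := by
        rw [div_le_one hS]
        exact hw.le
      have hmem : x₀ ∈ {x : Fin d → ℝ | ∑ i, |x i| ≤ R} := by
        show ∑ i, |x₀ i| ≤ R
        have : ∀ i, |x₀ i| = (R / S) * |w i| := by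
          intro i
          rw [hx₀, abs_mul, abs_of_pos hratio]
        rw [Finset.sum_congr rfl (fun i _ => this i), ← Finset.mul_sum, ← hSdef,
          div_mul_cancel₀ _ hS.ne']
      have hval : ∑ i, |(w - x₀) i| = S - R := by
        have : ∀ i, |(w - x₀) i| = (1 - R / S) * |w i| := by
          intro i
          have : (w - x₀) i = (1 - R / S) * w i := by
            simp [hx₀, Pi.sub_apply]
            ring
          rw [this, abs_mul, abs_of_nonneg (by linarith)]
        rw [Finset.sum_congr rfl (fun i _ => this i), ← Finset.mul_sum, ← hSdef]
        field_simp
      refine le_ciSup_of_le hbdd x₀ ?_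
      rw [ciSup_pos hmem]
      rw [hf, hval, hTdef, max_eq_left (by linarith)]


/-- Per-iteration identity for Laplace noise under `L₁`-bounded updates (core of Theorem 5):
`∫_{ℝ^d} sup_{‖x‖₁ ≤ R} f(w - x) dw = (λR)^d/d! + ∑_{i=0}^{d-1} (λR)^i / i!`,
where `f(w) = (λ/2)^d exp(-λ‖w‖₁)`. The first term equals `f(0)·V₁(d,R)` with
`V₁(d,R) = (2R)^d/d!` the volume of the `L₁`-ball of radius `R`. -/




theorem laplace_sliding_sup_integral
    (d : ℕ) (hd : 1 ≤ d) (lam R : ℝ) (hlam : 0 < lam) (hR : 0 < R)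
    (f : (Fin d → ℝ) → ℝ)
    (hf : ∀ w, f w = (lam / 2) ^ d * Real.exp (-lam * ∑ i, |w i|)) :
    (∫ w : Fin d → ℝ, ⨆ x ∈ {x : Fin d → ℝ | ∑ i, |x i| ≤ R}, f (w - x))
      = (lam * R) ^ d / (d.factorial : ℝ)
        + ∑ i ∈ Finset.range d, (lam * R) ^ i / (i.factorial : ℝ) := by
  classical
  set C : ℝ := (lam/2)^d with hCdef
  have hC : 0 < C := by positivity
  set g : (Fin d → ℝ) → ℝ :=
    fun w => C * Real.exp (-lam * max ((∑ i, |w i|) - R) 0) with hgdef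
  have hg0 : ∀ w, 0 ≤ g w := fun w => by positivity
  have hgleC : ∀ w, g w ≤ C := by
    intro w
    have h1 : Real.exp (-lam * max ((∑ i, |w i|) - R) 0) ≤ 1 := by
      rw [Real.exp_le_one_iff]
      have := le_max_right ((∑ i, |w i|) - R) (0:ℝ)
      nlinarith
    have : C * Real.exp (-lam * max ((∑ i, |w i|) - R) 0) ≤ C * 1 := by nlinarith
    simpa [hgdef] using this
  have hScont : Continuous fun w : Fin d → ℝ => ∑ i, |w i| :=
    continuous_finset_sum _ (fun i _ => (continuous_apply i).abs)
  have hgcont : Continuous g := by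
    refine continuous_const.mul (Real.continuous_exp.comp ?_)
    exact continuous_const.mul ((hScont.sub continuous_const).max continuous_const)
  have step1 : (∫ w : Fin d → ℝ, ⨆ x ∈ {x : Fin d → ℝ | ∑ i, |x i| ≤ R}, f (w - x))
      = ∫ w, g w := by
    refine integral_congr_ae (Eventually.of_forall fun w => ?_)
    exact aux_sup d lam R hlam hR f hf w
  rw [step1,
    integral_eq_lintegral_of_nonneg_ae (Eventually.of_forall hg0) hgcont.aestronglyMeasurable,
    lintegral_eq_lintegral_meas_le volume (Eventually.of_forall hg0)
      hgcont.measurable.aemeasurable]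
  have hsplit : ∫⁻ t in Ioi (0:ℝ), volume {w : Fin d → ℝ | t ≤ g w}
      = (∫⁻ t in Ioc (0:ℝ) C, volume {w : Fin d → ℝ | t ≤ g w})
        + ∫⁻ t in Ioi C, volume {w : Fin d → ℝ | t ≤ g w} := by
    rw [← lintegral_union measurableSet_Ioi (Ioc_disjoint_Ioi le_rfl),
      Ioc_union_Ioi_eq_Ioi hC.le]
  have htail : ∫⁻ t in Ioi C, volume {w : Fin d → ℝ | t ≤ g w} = 0 := by
    have hempty : ∀ t ∈ Ioi C, volume {w : Fin d → ℝ | t ≤ g w} = (0:ℝ≥0∞) := by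
      intro t ht
      have : {w : Fin d → ℝ | t ≤ g w} = ∅ := by
        rw [Set.eq_empty_iff_forall_notMem]
        intro w hw
        exact absurd (le_trans hw (hgleC w)) (not_le.mpr ht)
      rw [this, measure_empty]
    rw [setLIntegral_congr_fun measurableSet_Ioi hempty, lintegral_zero]
  rw [hsplit, htail, add_zero]
  set a : ℝ := 2*R + 2*Real.log C/lam with hadef
  set b : ℝ := 2/lam with hbdef
  have hb : 0 < b := by rw [hbdef]; positivity
  have hbase : ∀ t, 0 < t → t ≤ C →
      a - b * Real.log t = 2*(R + (Real.log C - Real.log t)/lam) := by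
    intro t _ _
    rw [hadef, hbdef]
    field_simp
    ring
  have hmid : ∀ t ∈ Ioc (0:ℝ) C, volume {w : Fin d → ℝ | t ≤ g w}
      = ENNReal.ofReal ((a - b * Real.log t)^d / (d.factorial : ℝ)) := by
    intro t ht
    obtain ⟨ht0, htC⟩ := ht
    have hlog : Real.log t ≤ Real.log C := Real.log_le_log ht0 htC
    have hr : 0 ≤ (Real.log C - Real.log t)/lam := div_nonneg (by linarith) hlam.le
    have hset : {w : Fin d → ℝ | t ≤ g w}
        = {w : Fin d → ℝ | ∑ i, |w i| ≤ R + (Real.log C - Real.log t)/lam} := by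
      ext w
      simp only [Set.mem_setOf_eq, hgdef]
      rw [← Real.log_le_log_iff ht0 (by positivity),
        Real.log_mul hC.ne' (Real.exp_ne_zero _), Real.log_exp]
      constructor
      · intro h
        have hM : max ((∑ i, |w i|) - R) 0 ≤ (Real.log C - Real.log t)/lam := by
          rw [le_div_iff₀ hlam]
          nlinarith
        have h2 := (le_max_left ((∑ i, |w i|) - R) 0).trans hM
        linarith
      · intro h
        have hM : max ((∑ i, |w i|) - R) 0 ≤ (Real.log C - Real.log t)/lam :=
          max_le (by linarith) hr
        rw [le_div_iff₀ hlam] at hM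
        nlinarith
    rw [hset, aux_volume_l1_ball d hd _ (by linarith)]
    congr 2
    rw [hbase t ht0 htC]
  rw [setLIntegral_congr_fun measurableSet_Ioc hmid]
  have hψint : IntegrableOn (fun t : ℝ => (a - b * Real.log t)^d / (d.factorial : ℝ))
      (Ioc (0:ℝ) C) := (aux_integrableOn_log_pow d a b C hC).div_const _
  have hψnn : 0 ≤ᵐ[volume.restrict (Ioc (0:ℝ) C)]
      fun t : ℝ => (a - b * Real.log t)^d / (d.factorial : ℝ) := by
    filter_upwards [ae_restrict_mem measurableSet_Ioc] with t ht
    have hlog : Real.log t ≤ Real.log C := Real.log_le_log ht.1 ht.2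
    have h0 : 0 ≤ a - b * Real.log t := by
      rw [hbase t ht.1 ht.2]
      have : 0 ≤ (Real.log C - Real.log t)/lam := div_nonneg (by linarith) hlam.le
      linarith
    positivity
  rw [← ofReal_integral_eq_lintegral_ofReal hψint hψnn]
  have hval : ∫ t in Ioc (0:ℝ) C, (a - b * Real.log t)^d / (d.factorial : ℝ)
      = (C * ∑ i ∈ Finset.range (d+1),
          ((d.factorial : ℝ) / (i.factorial : ℝ)) * b ^ (d-i) * (2*R) ^ i) / (d.factorial : ℝ) := by
    rw [integral_div, aux_integral_log_pow d a b C hb hC]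
    have h2R : a - b * Real.log C = 2*R := by
      rw [hadef, hbdef]
      field_simp
      ring
    rw [h2R]
  rw [hval]
  have hsum_nn : 0 ≤ (C * ∑ i ∈ Finset.range (d+1),
      ((d.factorial : ℝ) / (i.factorial : ℝ)) * b ^ (d-i) * (2*R) ^ i) / (d.factorial : ℝ) := by
    have : ∀ i ∈ Finset.range (d+1),
        (0:ℝ) ≤ ((d.factorial : ℝ) / (i.factorial : ℝ)) * b ^ (d-i) * (2*R) ^ i := by
      intro i _
      positivity
    have hs := Finset.sum_nonneg this
    positivity
  rw [ENNReal.toReal_ofReal hsum_nn]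
  -- final algebra
  have hterm : ∀ i ∈ Finset.range (d+1),
      C * (((d.factorial : ℝ) / (i.factorial : ℝ)) * b ^ (d-i) * (2*R) ^ i) / (d.factorial : ℝ)
        = (lam*R)^i / (i.factorial : ℝ) := by
    intro i hi
    have hik : i ≤ d := Nat.lt_succ_iff.mp (Finset.mem_range.mp hi)
    obtain ⟨k, hk⟩ : ∃ k, d = i + k := ⟨d - i, by omega⟩
    rw [hCdef, hbdef, hk, Nat.add_sub_cancel_left, pow_add]
    have hfi : ((i.factorial : ℝ)) ≠ 0 := by positivity
    have hfik : (((i+k).factorial : ℝ)) ≠ 0 := by positivity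
    have e2 : (lam/2)^k * (2/lam)^k = 1 := by
      rw [← mul_pow, show (lam/2)*(2/lam) = 1 from by field_simp]
      exact one_pow k
    have e3 : (lam/2)^i * (2*R)^i = (lam*R)^i := by
      rw [← mul_pow]
      congr 1
      ring
    calc (lam/2)^i * (lam/2)^k *
          ((((i+k).factorial : ℝ) / (i.factorial : ℝ)) * (2/lam) ^ k * (2*R) ^ i)
            / ((i+k).factorial : ℝ)
        = ((lam/2)^i * (2*R)^i) * ((lam/2)^k * (2/lam)^k)
            * (((i+k).factorial : ℝ) / ((i.factorial : ℝ) * ((i+k).factorial : ℝ))) := by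
          ring
      _ = (lam*R)^i * (1:ℝ) * (1 / (i.factorial : ℝ)) := by
          rw [e2, e3]
          congr 1
          rw [div_eq_div_iff (by positivity) (by positivity)]
          ring
      _ = (lam*R)^i / (i.factorial : ℝ) := by ring
  calc (C * ∑ i ∈ Finset.range (d+1),
        ((d.factorial : ℝ) / (i.factorial : ℝ)) * b ^ (d-i) * (2*R) ^ i) / (d.factorial : ℝ)
      = ∑ i ∈ Finset.range (d+1),
          C * (((d.factorial : ℝ) / (i.factorial : ℝ)) * b ^ (d-i) * (2*R) ^ i)
            / (d.factorial : ℝ) := by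
        rw [Finset.mul_sum, Finset.sum_div]
    _ = ∑ i ∈ Finset.range (d+1), (lam*R)^i / (i.factorial : ℝ) :=
        Finset.sum_congr rfl hterm
    _ = (lam * R) ^ d / (d.factorial : ℝ)
        + ∑ i ∈ Finset.range d, (lam * R) ^ i / (i.factorial : ℝ) := by
        rw [Finset.sum_range_succ, add_comm]
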